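/- Let a, a' ∈ F, b' ∈ F^× and μ ∈ F^×. If ([1,a'] ⊥ b'·[1,a']) ⊥ μ·([1,a'] ⊥ b'·[1,a']) is isometric to 4×ℍ, then [1,a] ⊥ b'·[1,a'] ⊥ μ·[1,a'] ⊥ (μb')·[1,a'] ⊥ [1, a+a'] is isometric to 5×ℍ. -/

import Mathlib

/-- The binary quadratic form `[b₁,b₂] : (x,y) ↦ b₁x² + xy + b₂y²` on `F × F`. -/
def binQF (F : Type*) [Field F] (b₁ b₂ : F) : QuadraticForm F (F × F) :=
  LinearMap.BilinMap.toQuadraticMap (LinearMap.mk₂ F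
    (fun p q : F × F => b₁ * (p.1 * q.1) + p.1 * q.2 + b₂ * (p.2 * q.2))
    (fun p p' q => by simp only [Prod.fst_add, Prod.snd_add]; ring)
    (fun a p q => by simp only [Prod.smul_fst, Prod.smul_snd, smul_eq_mul]; ring)
    (fun p q q' => by simp only [Prod.fst_add, Prod.snd_add]; ring)
    (fun a p q => by simp only [Prod.smul_fst, Prod.smul_snd, smul_eq_mul]; ring))

theorem binQF_apply (F : Type*) [Field F] (b₁ b₂ : F) (p : F × F) :
    binQF F b₁ b₂ p = b₁ * (p.1 * p.1) + p.1 * p.2 + b₂ * (p.2 * p.2) := rfl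

section aux

variable (F : Type*) [Field F] [CharP F 2] (a a' b' mu : F)

/-- The master linear equivalence. -/
def masterLE : ((F × F) × ((F × F) × ((F × F) × ((F × F) × (F × F))))) ≃ₗ[F]
    ((F × F) × (((F × F) × (F × F)) × ((F × F) × (F × F)))) where
  toFun v := ((v.1.1 + a * (v.1.2 + v.2.2.2.2.2), v.1.2 + v.2.2.2.2.2),
    (((v.2.2.2.2.1 + v.1.1, v.2.2.2.2.2), v.2.1), (v.2.2.1, v.2.2.2.1)))
  invFun w := ((w.1.1 - a * w.1.2, w.1.2 - w.2.1.1.2),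
    (w.2.1.2, (w.2.2.1, (w.2.2.2,
      (w.2.1.1.1 - w.1.1 + a * w.1.2, w.2.1.1.2)))))
  map_add' x y := by
    simp only [Prod.fst_add, Prod.snd_add, Prod.mk_add_mk, Prod.mk.injEq, and_true, true_and]
    and_intros <;> ring
  map_smul' c x := by
    simp only [Prod.smul_fst, Prod.smul_snd, Prod.smul_mk, smul_eq_mul, RingHom.id_apply,
      Prod.mk.injEq, and_true, true_and]
    and_intros <;> ring
  left_inv x := by
    simp only [Prod.mk.injEq]
    and_intros <;> ring
  right_inv w := by
    simp only [Prod.mk.injEq]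
    and_intros <;> ring

/-- Isometry: Goal form ≃ ℍ ⊥ (hypothesis form). -/
def masterIso : QuadraticMap.IsometryEquiv
    ((binQF F 1 a).prod ((b' • binQF F 1 a').prod ((mu • binQF F 1 a').prod
      (((mu * b') • binQF F 1 a').prod (binQF F 1 (a + a'))))))
    ((binQF F 0 0).prod
      ((((binQF F 1 a').prod (b' • binQF F 1 a')).prod
        (mu • ((binQF F 1 a').prod (b' • binQF F 1 a')))))) where
  toLinearEquiv := masterLE F a
  map_app' v := by
    obtain ⟨⟨p, q⟩, ⟨x2, y2⟩, ⟨x3, y3⟩, ⟨x4, y4⟩, r, w⟩ := v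
    have h2 : (2 : F) = 0 := by exact_mod_cast CharP.cast_eq_zero F 2
    simp only [masterLE, QuadraticMap.prod_apply, QuadraticMap.smul_apply, binQF_apply,
      LinearEquiv.coe_mk, smul_eq_mul]
    linear_combination (p * w + a * q * w + r * p) * h2

/-- 5 hyperbolic planes as ℍ ⊥ 4ℍ. -/
def piSuccIso : QuadraticMap.IsometryEquiv
    ((binQF F 0 0).prod (QuadraticMap.pi (fun _ : Fin 4 => binQF F 0 0)))
    (QuadraticMap.pi (fun _ : Fin 5 => binQF F 0 0)) where
  toLinearEquiv :=
    { toFun := fun x => Fin.cons x.1 x.2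
      invFun := fun f => (f 0, fun i => f i.succ)
      map_add' := fun x y => by
        funext i
        refine Fin.cases ?_ (fun j => ?_) i <;> simp
      map_smul' := fun c x => by
        funext i
        refine Fin.cases ?_ (fun j => ?_) i <;> simp
      left_inv := fun x => by simp
      right_inv := fun f => by
        funext i
        refine Fin.cases ?_ (fun j => ?_) i <;> simp }
  map_app' x := by
    simp only [QuadraticMap.pi_apply, QuadraticMap.prod_apply, LinearEquiv.coe_mk]
    rw [Fin.sum_univ_succ]
    simp

end aux

theorem stmt13 (F : Type*) [Field F] [CharP F 2] (a a' b' mu : F)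
    (hb' : b' ≠ 0) (hmu : mu ≠ 0)
    (hhyp : QuadraticMap.Equivalent
      (((binQF F 1 a').prod (b' • binQF F 1 a')).prod
        (mu • ((binQF F 1 a').prod (b' • binQF F 1 a'))))
      (QuadraticMap.pi (fun _ : Fin 4 => binQF F 0 0))) :
    QuadraticMap.Equivalent
      ((binQF F 1 a).prod ((b' • binQF F 1 a').prod ((mu • binQF F 1 a').prod
        (((mu * b') • binQF F 1 a').prod (binQF F 1 (a + a'))))))
      (QuadraticMap.pi (fun _ : Fin 5 => binQF F 0 0)) := by
  exact QuadraticMap.Equivalent.trans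
    (QuadraticMap.Equivalent.trans ⟨masterIso F a a' b' mu⟩
      (QuadraticMap.Equivalent.prod ⟨QuadraticMap.IsometryEquiv.refl _⟩ hhyp))
    ⟨piSuccIso F⟩
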